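/- Every finitely supported injection f : ℘_fs(A) → ℘_fs(A) is surjective, where ℘_fs(A) is the set of finitely supported (i.e. finite or cofinite) subsets of the set A of atoms with the elementwise action of finitary permutations; in particular there is no finitely supported bijection from ℘_fs(A) onto a finitely supported proper subset of ℘_fs(A), and hence no finitely supported bijection between ℘_fin(A) and ℘_fs(A). -/

import Mathlib

open Pointwise

/-- The group of finitary permutations of the set `A` of atoms: bijections of `A`
whose set of non-fixed points is finite. -/
def FinPerm (A : Type*) : Subgroup (Equiv.Perm A) where
  carrier := {π : Equiv.Perm A | {a : A | π a ≠ a}.Finite}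
  one_mem' := by simp
  mul_mem' := by
    intro π σ hπ hσ
    refine Set.Finite.subset (Set.Finite.union hπ hσ) ?_
    intro a ha
    simp only [Set.mem_setOf_eq, Set.mem_union] at *
    by_contra h
    push_neg at h
    obtain ⟨h1, h2⟩ := h
    exact ha (by rw [Equiv.Perm.mul_apply, h2, h1])
  inv_mem' := by
    intro π hπ
    refine Set.Finite.subset hπ ?_
    intro a ha
    simp only [Set.mem_setOf_eq] at *
    intro h
    exact ha (π.injective (by simp [h]))

/-- An element `x` is finitely supported if some finite set of atoms supports it. -/
def FinSupp (A : Type*) {X : Type*} [SMul (FinPerm A) X] (x : X) : Prop :=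
  ∃ S : Finset A, MulAction.Supports (FinPerm A) (S : Set A) x

/-- The least support of an element: the intersection of all finite sets of atoms
supporting it. -/
def supp (A : Type*) {X : Type*} [SMul (FinPerm A) X] (x : X) : Set A :=
  ⋂₀ {S : Set A | S.Finite ∧ MulAction.Supports (FinPerm A) S x}

/-- A set `S` of atoms supports a function `f` if `f (π • x) = π • f x` for every
finitary permutation `π` fixing `S` pointwise. -/
def SuppFun (A : Type*) {X Y : Type*} [SMul (FinPerm A) X] [SMul (FinPerm A) Y]
    (S : Set A) (f : X → Y) : Prop :=
  ∀ π : FinPerm A, (∀ a ∈ S, π • a = a) → ∀ x, f (π • x) = π • f x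

/-- A set `S` of atoms supports a function `f` between the subsets `X` and `Y` if, for
every finitary permutation `π` fixing `S` pointwise and every `x ∈ X`, we have
`π • x ∈ X`, `π • f x ∈ Y` and `f (π • x) = π • f x`. -/
def SuppFunOn (A : Type*) {U V : Type*} [SMul (FinPerm A) U] [SMul (FinPerm A) V]
    (S : Set A) (X : Set U) (Y : Set V) (f : U → V) : Prop :=
  ∀ π : FinPerm A, (∀ a ∈ S, π • a = a) →
    ∀ x ∈ X, π • x ∈ X ∧ π • f x ∈ Y ∧ f (π • x) = π • f x

/-- `℘_fs(X)`: the finitely supported subsets of the set `X`. -/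
def Pfs (A : Type*) {U : Type*} [SMul (FinPerm A) U] (X : Set U) : Set (Set U) :=
  {Z : Set U | Z ⊆ X ∧ FinSupp A Z}


theorem finPerm_smul_set {A : Type*} (π : FinPerm A) (X : Set A) :
    π • X = (π : Equiv.Perm A) '' X := rfl

theorem swap_mem_finPerm {A : Type*} [DecidableEq A] (a b : A) : Equiv.swap a b ∈ FinPerm A := by
  refine Set.Finite.subset ((Set.finite_singleton b).insert a) ?_
  intro x hx
  simp only [Set.mem_setOf_eq] at hx
  by_contra h
  simp only [Set.mem_insert_iff, Set.mem_singleton_iff] at h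
  push_neg at h
  exact hx (Equiv.swap_apply_of_ne_of_ne h.1 h.2)

theorem supports_shape {A : Type*} (T : Set A) (X : Set A)
    (h : ∀ π : FinPerm A, (∀ a ∈ T, π • a = a) → π • X = X) :
    X ⊆ T ∨ Xᶜ ⊆ T := by
  by_contra hc
  push_neg at hc
  obtain ⟨a, haX, haT⟩ := Set.not_subset.mp hc.1
  obtain ⟨b, hbX, hbT⟩ := Set.not_subset.mp hc.2
  classical
  set π : FinPerm A := ⟨Equiv.swap a b, swap_mem_finPerm a b⟩ with hπ
  have hfix : ∀ c ∈ T, π • c = c := by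
    intro c hc'
    show Equiv.swap a b c = c
    exact Equiv.swap_apply_of_ne_of_ne (fun e => haT (e ▸ hc')) (fun e => hbT (e ▸ hc'))
  have hXX := h π hfix
  have hbmem : b ∈ X := by
    rw [← hXX, finPerm_smul_set]
    exact ⟨a, haX, Equiv.swap_apply_left a b⟩
  exact hbX hbmem

theorem shape_supports {A : Type*} (T : Set A) (X : Set A) (h : X ⊆ T ∨ Xᶜ ⊆ T) :
    ∀ π : FinPerm A, (∀ a ∈ T, π • a = a) → π • X = X := by
  intro π hfix
  have key : ∀ Z : Set A, Z ⊆ T → π • Z = Z := by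
    intro Z hZ
    rw [finPerm_smul_set,
      show ((π : Equiv.Perm A) '' Z) = id '' Z from Set.image_congr (fun y hy => hfix y (hZ hy))]
    exact Set.image_id Z
  rcases h with h | h
  · exact key X h
  · have hcompl := key Xᶜ h
    rw [finPerm_smul_set] at hcompl ⊢
    calc (π : Equiv.Perm A) '' X = (π : Equiv.Perm A) '' Xᶜᶜ := by rw [compl_compl]
      _ = ((π : Equiv.Perm A) '' Xᶜ)ᶜ := Set.image_compl_eq (π : Equiv.Perm A).bijective
      _ = Xᶜᶜ := by rw [hcompl]
      _ = X := compl_compl X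

theorem key_surj {A : Type*} [Infinite A] (f : Set A → Set A) (S : Finset A)
    (hinj : Set.InjOn f {X : Set A | FinSupp A X})
    (hequiv : ∀ π : FinPerm A, (∀ a ∈ (S : Set A), π • a = a) →
      ∀ X : Set A, FinSupp A X → f (π • X) = π • f X) :
    ∀ Y : Set A, FinSupp A Y → ∃ X : Set A, FinSupp A X ∧ f X = Y := by
  classical
  intro Y hY
  obtain ⟨T₀, hT₀⟩ := hY
  set T : Finset A := T₀ ∪ S with hT
  set B : Set (Set A) := {X : Set A | X ⊆ ↑T ∨ Xᶜ ⊆ ↑T} with hB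
  have hBfin : B.Finite := by
    apply Set.Finite.subset (Set.Finite.union T.finite_toSet.finite_subsets
      (T.finite_toSet.finite_subsets.image compl))
    rintro X (h | h)
    · exact Or.inl h
    · exact Or.inr ⟨Xᶜ, h, compl_compl X⟩
  have hBfs : ∀ X ∈ B, FinSupp A X := by
    intro X hX
    rw [hB, Set.mem_setOf_eq] at hX
    exact ⟨T, fun π hfix => shape_supports ↑T X hX π hfix⟩
  have hmaps : Set.MapsTo f B B := by
    intro X hX
    have hX' : X ⊆ ↑T ∨ Xᶜ ⊆ ↑T := by rwa [hB, Set.mem_setOf_eq] at hX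
    refine supports_shape ↑T (f X) ?_
    intro π hfix
    have h1 : f (π • X) = π • f X :=
      hequiv π (fun a ha => hfix a (by simp [hT, ha])) X (hBfs X hX)
    rw [← h1, shape_supports ↑T X hX' π hfix]
  have hYB : Y ∈ B := by
    have hsub : (T₀ : Set A) ⊆ ↑T := by intro a ha; simp [hT]; exact Or.inl ha
    rcases supports_shape (T₀ : Set A) Y (fun π hfix => hT₀ π hfix) with h | h
    · exact Or.inl (h.trans hsub)
    · exact Or.inr (h.trans hsub)
  have hbij := (hBfin.injOn_iff_bijOn_of_mapsTo hmaps).mp (hinj.mono hBfs)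
  obtain ⟨X, hXB, hfX⟩ := hbij.surjOn hYB
  exact ⟨X, hBfs X hXB, hfX⟩

/-- every finitely supported injection `f : ℘_fs(A) → ℘_fs(A)` is
surjective; in particular there is no finitely supported bijection from `℘_fs(A)` onto a
finitely supported proper subset of `℘_fs(A)`, and hence no finitely supported bijection
between `℘_fin(A)` and `℘_fs(A)`. -/
theorem finSupp_injection_pfsAtoms_surjective {A : Type*} [Infinite A] :
    (∀ (f : Set A → Set A) (S : Finset A),
      (∀ X : Set A, FinSupp A X → FinSupp A (f X)) →
      Set.InjOn f {X : Set A | FinSupp A X} →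
      (∀ π : FinPerm A, (∀ a ∈ (S : Set A), π • a = a) →
        ∀ X : Set A, FinSupp A X → f (π • X) = π • f X) →
      ∀ Y : Set A, FinSupp A Y → ∃ X : Set A, FinSupp A X ∧ f X = Y) ∧
    (¬ ∃ (T : Set (Set A)) (f : Set A → Set A) (S : Finset A),
      T ⊆ {X : Set A | FinSupp A X} ∧ T ≠ {X : Set A | FinSupp A X} ∧ FinSupp A T ∧
      (∀ X : Set A, FinSupp A X → f X ∈ T) ∧
      Set.InjOn f {X : Set A | FinSupp A X} ∧
      (∀ Y ∈ T, ∃ X : Set A, FinSupp A X ∧ f X = Y) ∧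
      (∀ π : FinPerm A, (∀ a ∈ (S : Set A), π • a = a) →
        ∀ X : Set A, FinSupp A X → f (π • X) = π • f X)) ∧
    (¬ ∃ (f : Set A → Set A) (S : Finset A),
      (∀ X : Set A, FinSupp A X → (f X).Finite) ∧
      Set.InjOn f {X : Set A | FinSupp A X} ∧
      (∀ Y : Set A, Y.Finite → ∃ X : Set A, FinSupp A X ∧ f X = Y) ∧
      (∀ π : FinPerm A, (∀ a ∈ (S : Set A), π • a = a) →
        ∀ X : Set A, FinSupp A X → f (π • X) = π • f X)) := by
  refine ⟨?_, ?_, ?_⟩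
  · intro f S _ hinj hequiv Y hY
    exact key_surj f S hinj hequiv Y hY
  · rintro ⟨T, f, S, hTsub, hTne, -, hmem, hinj, -, hequiv⟩
    apply hTne
    refine Set.Subset.antisymm hTsub ?_
    intro Y hY
    obtain ⟨X, hX, hfX⟩ := key_surj f S hinj hequiv Y hY
    exact hfX ▸ hmem X hX
  · rintro ⟨f, S, hfin, hinj, -, hequiv⟩
    have huniv : FinSupp A (Set.univ : Set A) := ⟨∅, fun π _ => by
      rw [finPerm_smul_set, Set.image_univ, Equiv.range_eq_univ]⟩
    obtain ⟨X, hX, hfX⟩ := key_surj f S hinj hequiv Set.univ huniv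
    have hcontra := hfin X hX
    rw [hfX] at hcontra
    exact Set.infinite_univ hcontra
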